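/- Fix hyperbolic filling data for a metric space Z with parameters a, τ, and let Z̄ denote the metric completion of Z with extended metric d̄. Let (u_j)_{j ∈ ℕ} be a descending sequence of vertices anchored at some z ∈ Z̄, i.e. h(u_{j+1}) = h(u_j) − 1, u_j ∼ u_{j+1}, and d̄(z, u_j) < (τ/3)·a^{h(u_j)} for all j. Then for every vertex w there exists N ∈ ℕ such that for all j ≥ N: h(w) − h(u_j) ≤ |u_j w| ≤ h(w) − h(u_j) + 1, where |u_j w| is the graph distance. (Consequently the Busemann function of the geodesic ray determined by (u_j) agrees with h + h(u₀) up to an additive error of 1 on vertices.) -/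

import Mathlib

open Filter

/-- Hyperbolic filling data for a metric space `Z` with parameter `a`: a choice, for
each `n : ℤ`, of a maximal `a^n`-separated subset `S n` of `Z`. -/
structure HypFilling (Z : Type*) [MetricSpace Z] (a : ℝ) where
  S : ℤ → Set Z
  separated : ∀ n : ℤ, ∀ x ∈ S n, ∀ y ∈ S n, x ≠ y → a ^ n ≤ dist x y
  maximal : ∀ (n : ℤ) (z : Z), ∃ x ∈ S n, dist z x < a ^ n

namespace HypFilling

variable {Z : Type*} [MetricSpace Z] {a : ℝ}

/-- The vertex set of the hyperbolic filling. -/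
def Vertex (F : HypFilling Z a) : Type _ := {p : Z × ℤ // p.1 ∈ F.S p.2}

/-- The height of a vertex. -/
def height {F : HypFilling Z a} (v : F.Vertex) : ℤ := v.1.2

/-- The underlying point in `Z` of a vertex. -/
def pt {F : HypFilling Z a} (v : F.Vertex) : Z := v.1.1

/-- Adjacency in the hyperbolic filling graph with dilation parameter `τ`: distinct
vertices of heights differing by at most `1` whose associated dilated balls meet. -/
def Adj {F : HypFilling Z a} (τ : ℝ) (v w : F.Vertex) : Prop :=
  v ≠ w ∧ |height v - height w| ≤ 1 ∧
    ∃ z : Z, dist z (pt v) < τ * a ^ height v ∧ dist z (pt w) < τ * a ^ height w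

/-- `f 0, f 1, …, f k` is a walk in the filling graph. -/
def IsWalk {F : HypFilling Z a} (τ : ℝ) (k : ℕ) (f : ℕ → F.Vertex) : Prop :=
  ∀ i < k, Adj τ (f i) (f (i + 1))

/-- Two vertices are joined by a walk. -/
def Joined {F : HypFilling Z a} (τ : ℝ) (v w : F.Vertex) : Prop :=
  ∃ (k : ℕ) (f : ℕ → F.Vertex), f 0 = v ∧ f k = w ∧ IsWalk τ k f

/-- The graph distance: the minimal number of edges of a walk joining `v` to `w`. -/
noncomputable def graphDist {F : HypFilling Z a} (τ : ℝ) (v w : F.Vertex) : ℕ :=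
  sInf {k : ℕ | ∃ f : ℕ → F.Vertex, f 0 = v ∧ f k = w ∧ IsWalk τ k f}

/-- The Gromov product `(v|w)_h` formed with heights and graph distances. -/
noncomputable def gpH {F : HypFilling Z a} (τ : ℝ) (v w : F.Vertex) : ℝ :=
  ((height v : ℝ) + (height w : ℝ) - (graphDist τ v w : ℝ)) / 2

/-- An ascending vertical walk from `u` to `v`. -/
def VertWalkUp {F : HypFilling Z a} (τ : ℝ) (u v : F.Vertex) : Prop :=
  ∃ (k : ℕ) (f : ℕ → F.Vertex), f 0 = u ∧ f k = v ∧
    ∀ i < k, Adj τ (f i) (f (i + 1)) ∧ height (f (i + 1)) = height (f i) + 1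

/-- A cone point for the pair `{v, w}`: a vertex joined to each of `v` and `w` by a
vertical walk, of height at most `min (height v) (height w)`. -/
def ConePoint {F : HypFilling Z a} (τ : ℝ) (u v w : F.Vertex) : Prop :=
  VertWalkUp τ u v ∧ VertWalkUp τ u w ∧ height u ≤ min (height v) (height w)

/-- A branch point for the pair `{v, w}`: a cone point of maximal height. -/
def BranchPoint {F : HypFilling Z a} (τ : ℝ) (u v w : F.Vertex) : Prop :=
  ConePoint τ u v w ∧ ∀ u' : F.Vertex, ConePoint τ u' v w → height u' ≤ height u

lemma walk_height_bound {F : HypFilling Z a} {τ : ℝ} :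
    ∀ (k : ℕ) (f : ℕ → F.Vertex), IsWalk τ k f →
      |height (f k) - height (f 0)| ≤ (k : ℤ) := by
  intro k
  induction k with
  | zero => intro f _; simp
  | succ k ih =>
    intro f hf
    have h1 := ih f (fun i hi => hf i (by omega))
    have h2 := (hf k (by omega)).2.1
    rw [abs_sub_comm] at h2
    have h3 : |height (f (k+1)) - height (f 0)| ≤
        |height (f (k+1)) - height (f k)| + |height (f k) - height (f 0)| :=
      abs_sub_le _ _ _
    push_cast
    omega

end HypFilling

open UniformSpace in
/-- Theorem: for an anchored descending sequence of vertices `(u j)`, the graph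
distance to any fixed vertex `w` is eventually the height difference, up to `1`. -/
theorem statement19 {Z : Type*} [MetricSpace Z] (a τ : ℝ)
    (ha0 : 0 < a) (ha1 : a < 1) (hτ : max 3 (1 / (1 - a)) < τ)
    (F : HypFilling Z a) (z : Completion Z) (u : ℕ → F.Vertex)
    (hdesc : ∀ j : ℕ, HypFilling.height (u (j + 1)) = HypFilling.height (u j) - 1)
    (hadj : ∀ j : ℕ, HypFilling.Adj τ (u j) (u (j + 1)))
    (hanch : ∀ j : ℕ,
      dist z ((HypFilling.pt (u j) : Z) : Completion Z) <
        (τ / 3) * a ^ HypFilling.height (u j)) :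
    ∀ w : F.Vertex, ∃ N : ℕ, ∀ j ≥ N,
      HypFilling.height w - HypFilling.height (u j) ≤
          (HypFilling.graphDist τ (u j) w : ℤ) ∧
      (HypFilling.graphDist τ (u j) w : ℤ) ≤
          HypFilling.height w - HypFilling.height (u j) + 1 := by
  classical
  intro w
  open HypFilling in
  -- basic positivity facts
  have hτ3 : (3 : ℝ) < τ := lt_of_le_of_lt (le_max_left _ _) hτ
  have hτ1 : (1 : ℝ) ≤ τ := by linarith
  have hpow : ∀ n : ℤ, (0 : ℝ) < a ^ n := fun n => zpow_pos ha0 n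
  -- the chain of vertices near `pt w`
  have hv : ∀ n : ℤ, ∃ x : F.Vertex,
      HypFilling.height x = n ∧ dist (HypFilling.pt w) (HypFilling.pt x) < a ^ n := by
    intro n
    obtain ⟨x, hx, hd⟩ := F.maximal n (HypFilling.pt w)
    exact ⟨⟨(x, n), hx⟩, rfl, hd⟩
  choose v hvH hvD using hv
  -- heights of the sequence
  have hht : ∀ j : ℕ, HypFilling.height (u j) = HypFilling.height (u 0) - j := by
    intro j
    induction j with
    | zero => simp
    | succ j ih => rw [hdesc j, ih]; push_cast; ring
  set h0 : ℤ := HypFilling.height (u 0) with hh0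
  set hw : ℤ := HypFilling.height w with hhw
  set D : ℝ := dist z ((HypFilling.pt w : Z) : Completion Z) with hD
  -- eventual smallness of `D * a ^ j`
  have hC : (0 : ℝ) < (2 * τ / 3) * a ^ h0 := by
    have := hpow h0; positivity
  have haj : Filter.Tendsto (fun j : ℕ => D * a ^ j) atTop (nhds 0) := by
    simpa using (tendsto_pow_atTop_nhds_zero_of_lt_one ha0.le ha1).const_mul D
  have hev : ∀ᶠ j : ℕ in atTop, D * a ^ j < (2 * τ / 3) * a ^ h0 :=
    haj.eventually (gt_mem_nhds hC)
  obtain ⟨N1, hN1⟩ := Filter.eventually_atTop.mp hev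
  refine ⟨max N1 (h0 - hw + 1).toNat, fun j hj => ?_⟩
  have hjN1 : N1 ≤ j := le_trans (le_max_left _ _) hj
  have hjN2 : (h0 - hw + 1).toNat ≤ j := le_trans (le_max_right _ _) hj
  set m : ℤ := HypFilling.height (u j) with hm
  have hmval : m = h0 - j := hht j
  have hmle : m ≤ hw - 1 := by
    have h1 : (h0 - hw + 1 : ℤ) ≤ ((h0 - hw + 1).toNat : ℤ) := Int.self_le_toNat _
    have h2 : ((h0 - hw + 1).toNat : ℤ) ≤ (j : ℤ) := by exact_mod_cast hjN2
    omega
  -- the key distance inequality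
  have hDm : D < (2 * τ / 3) * a ^ m := by
    have h1 : D * a ^ j < ((2 * τ / 3) * a ^ m) * a ^ j := by
      have : a ^ h0 = a ^ m * a ^ (j : ℤ) := by
        rw [← zpow_add₀ (ne_of_gt ha0)]; congr 1; omega
      have h2 := hN1 j hjN1
      rw [this] at h2
      rw [zpow_natCast] at h2
      linarith [h2]
    exact lt_of_mul_lt_mul_right h1 (pow_pos ha0 j).le
  have hkey : dist (HypFilling.pt w) (HypFilling.pt (u j)) < τ * a ^ m := by
    have h1 : dist (HypFilling.pt w) (HypFilling.pt (u j)) =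
        dist ((HypFilling.pt w : Z) : Completion Z)
          ((HypFilling.pt (u j) : Z) : Completion Z) :=
      (Completion.dist_eq _ _).symm
    have h2 : dist ((HypFilling.pt w : Z) : Completion Z)
          ((HypFilling.pt (u j) : Z) : Completion Z) ≤
        D + dist z ((HypFilling.pt (u j) : Z) : Completion Z) := by
      rw [hD, dist_comm z]
      exact dist_triangle _ _ _
    have h3 := hanch j
    rw [← hm] at h3
    have := hpow m
    rw [h1]
    calc dist ((HypFilling.pt w : Z) : Completion Z)
          ((HypFilling.pt (u j) : Z) : Completion Z)
        ≤ D + dist z ((HypFilling.pt (u j) : Z) : Completion Z) := h2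
      _ < (2 * τ / 3) * a ^ m + (τ / 3) * a ^ m := by linarith
      _ = τ * a ^ m := by ring
  -- adjacencies along the chain
  have hne_of_height : ∀ x y : F.Vertex, HypFilling.height x ≠ HypFilling.height y → x ≠ y := by
    intro x y hxy h; exact hxy (by rw [h])
  have hlt_self : ∀ n : ℤ, dist (HypFilling.pt w) (HypFilling.pt (v n)) < τ * a ^ n :=
    fun n => lt_of_lt_of_le (hvD n)
      (le_mul_of_one_le_left (hpow n).le hτ1)
  have adjvv : ∀ n : ℤ, HypFilling.Adj τ (v n) (v (n + 1)) := by
    intro n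
    refine ⟨hne_of_height _ _ (by rw [hvH, hvH]; omega), ?_, HypFilling.pt w, ?_, ?_⟩
    · rw [hvH, hvH]; simp
    · rw [hvH]; exact hlt_self n
    · rw [hvH]; exact hlt_self (n + 1)
  have adjuv : HypFilling.Adj τ (u j) (v (m + 1)) := by
    refine ⟨hne_of_height _ _ (by rw [hvH, ← hm]; omega), ?_, HypFilling.pt w, ?_, ?_⟩
    · rw [hvH, ← hm]; simp
    · rw [← hm]; exact hkey
    · rw [hvH]; exact hlt_self (m + 1)
  -- the walk
  set L : ℕ := (hw - m).toNat with hL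
  have hLval : (L : ℤ) = hw - m := Int.toNat_of_nonneg (by omega)
  have hL1 : 1 ≤ L := by omega
  set g : ℕ → F.Vertex := fun i => if i = 0 then u j else v (m + i) with hg
  have hg0 : g 0 = u j := by simp [hg]
  have hgL : g L = v hw := by
    have : (m + L : ℤ) = hw := by omega
    simp only [hg, if_neg (by omega : L ≠ 0), this]
  have hgwalk : HypFilling.IsWalk τ L g := by
    intro i hi
    rcases Nat.eq_zero_or_pos i with h | h
    · subst h
      simpa only [hg, if_pos rfl, if_neg (by omega : (0 + 1 : ℕ) ≠ 0), zero_add, Nat.cast_one] using adjuv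
    · have h1 : g i = v (m + i) := by simp [hg, Nat.pos_iff_ne_zero.mp h]
      have h2 : g (i + 1) = v ((m + i) + 1) := by
        have : (m + (i + 1 : ℕ) : ℤ) = (m + i) + 1 := by push_cast; ring
        simp only [hg, if_neg (by omega : i + 1 ≠ 0), this]
      rw [h1, h2]
      exact adjvv _
  -- membership in the walk set and the upper bound
  have hmem : ∃ k ∈ {k : ℕ | ∃ f : ℕ → F.Vertex, f 0 = u j ∧ f k = w ∧
      HypFilling.IsWalk τ k f}, k ≤ L + 1 := by
    by_cases hvw : v hw = w
    · exact ⟨L, ⟨g, hg0, by rw [hgL, hvw], hgwalk⟩, by omega⟩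
    · refine ⟨L + 1, ⟨fun i => if i ≤ L then g i else w, by simp [hg0], ?_, ?_⟩, le_refl _⟩
      · simp
      · intro i hi
        show HypFilling.Adj τ (if i ≤ L then g i else w) (if i + 1 ≤ L then g (i + 1) else w)
        rcases Nat.lt_or_ge i L with h | h
        · have e1 : (if i ≤ L then g i else w) = g i := if_pos (by omega)
          have e2 : (if i + 1 ≤ L then g (i + 1) else w) = g (i + 1) := if_pos (by omega)
          rw [e1, e2]
          exact hgwalk i h
        · have hiL : i = L := by omega
          subst hiL
          have e1 : (if L ≤ L then g L else w) = v hw := by rw [if_pos le_rfl, hgL]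
          have e2 : (if L + 1 ≤ L then g (L + 1) else w) = w := if_neg (by omega)
          rw [e1, e2]
          refine ⟨hvw, ?_, HypFilling.pt w, ?_, ?_⟩
          · rw [hvH]; simp [hhw]
          · rw [hvH]; exact hlt_self hw
          · rw [dist_self]; exact mul_pos (by linarith) (hpow hw)
  obtain ⟨k, hk, hkL⟩ := hmem
  have hne : {k : ℕ | ∃ f : ℕ → F.Vertex, f 0 = u j ∧ f k = w ∧
      HypFilling.IsWalk τ k f}.Nonempty := ⟨k, hk⟩
  have hub : HypFilling.graphDist τ (u j) w ≤ L + 1 :=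
    le_trans (Nat.sInf_le hk) hkL
  -- lower bound via the height lemma
  obtain ⟨f, hf0, hfk, hfw⟩ := Nat.sInf_mem hne
  have hlb := HypFilling.walk_height_bound (F := F) (τ := τ) _ f hfw
  rw [hf0, hfk] at hlb
  have habs : |hw - m| ≤ (HypFilling.graphDist τ (u j) w : ℤ) := hlb
  constructor
  · exact le_trans (le_abs_self _) habs
  · have h5 : (HypFilling.graphDist τ (u j) w : ℤ) ≤ (L : ℤ) + 1 := by exact_mod_cast hub
    linarith [hLval]
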